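/- Let h : ℝⁿ → ℝ be measurable with sup_{x} |e^{(3t/4)Δ}(|e^{(t/4)Δ} h|²)(x)|^{1/2} well-defined. Then for all x ∈ ℝⁿ and 0 < s < t/2, the averaged quantity ⨍_{B(x,s^{1/2})} |e^{(t−s)Δ} h(y)|² dy ≤ C · e^{(3t/4)Δ}( |e^{(t/4)Δ} h|² )(x), with C depending only on n. -/

import Mathlib

open MeasureTheory Metric Real

/-- The Gaussian heat kernel `G_t(x) = (4πt)^{-n/2} exp(-|x|²/(4t))` on ℝⁿ. -/
noncomputable def heatKernel (n : ℕ) (t : ℝ) (x : EuclideanSpace ℝ (Fin n)) : ℝ :=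
  (4 * π * t) ^ (-(n : ℝ) / 2) * Real.exp (-‖x‖ ^ 2 / (4 * t))

noncomputable def gk (a x : ℝ) : ℝ := (Real.sqrt (4 * π * a))⁻¹ * Real.exp (-x ^ 2 / (4 * a))

lemma gk_pos {a : ℝ} (ha : 0 < a) (x : ℝ) : 0 < gk a x := by
  have h4 : 0 < 4 * π * a := by positivity
  exact mul_pos (inv_pos.2 (Real.sqrt_pos.2 h4)) (Real.exp_pos _)

lemma gk_exp_eq {a : ℝ} (ha : 0 < a) (x : ℝ) :
    Real.exp (-x ^ 2 / (4 * a)) = Real.exp (-(1 / (4 * a)) * x ^ 2) := by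
  congr 1; field_simp

lemma gk_integrable {a : ℝ} (ha : 0 < a) : Integrable (gk a) := by
  have : Integrable (fun x : ℝ => Real.exp (-(1 / (4 * a)) * x ^ 2)) :=
    integrable_exp_neg_mul_sq (by positivity)
  have h : Integrable (fun x : ℝ => Real.exp (-x ^ 2 / (4 * a))) := by
    simpa only [gk_exp_eq ha] using this
  exact h.const_mul _

lemma gk_integral {a : ℝ} (ha : 0 < a) : ∫ x, gk a x = 1 := by
  have h4 : (0:ℝ) < 4 * a := by positivity
  simp only [gk, gk_exp_eq ha]
  rw [integral_const_mul, integral_gaussian]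
  have : π / (1 / (4 * a)) = 4 * π * a := by field_simp
  rw [this, inv_mul_cancel₀]
  exact ne_of_gt (Real.sqrt_pos.2 (by positivity))


-- the completed-square identity
example (a b w y : ℝ) (ha : 0 < a) (hb : 0 < b) :
    -(w - y) ^ 2 / (4 * a) + -y ^ 2 / (4 * b)
      = -((a + b) / (4 * (a * b))) * (y - b * w / (a + b)) ^ 2 + -w ^ 2 / (4 * (a + b)) := by
  have hab : a + b ≠ 0 := by positivity
  field_simp
  ring

lemma gk_conv_zero {a b : ℝ} (ha : 0 < a) (hb : 0 < b) (w : ℝ) :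
    ∫ y, gk a (w - y) * gk b y = gk (a + b) w := by
  have hab : (0:ℝ) < a + b := by positivity
  have key : ∀ y : ℝ, gk a (w - y) * gk b y
      = ((Real.sqrt (4 * π * a))⁻¹ * (Real.sqrt (4 * π * b))⁻¹
          * Real.exp (-w ^ 2 / (4 * (a + b))))
        * Real.exp (-((a + b) / (4 * (a * b))) * (y - b * w / (a + b)) ^ 2) := by
    intro y
    rw [gk, gk]
    have : -(w - y) ^ 2 / (4 * a) + -y ^ 2 / (4 * b)
        = -((a + b) / (4 * (a * b))) * (y - b * w / (a + b)) ^ 2 + -w ^ 2 / (4 * (a + b)) := by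
      have hab' : a + b ≠ 0 := ne_of_gt hab
      field_simp
      ring
    rw [show ((√(4 * π * a))⁻¹ * rexp (-(w - y) ^ 2 / (4 * a)) *
        ((√(4 * π * b))⁻¹ * rexp (-y ^ 2 / (4 * b))))
      = ((√(4 * π * a))⁻¹ * (√(4 * π * b))⁻¹) *
        rexp (-(w - y) ^ 2 / (4 * a) + -y ^ 2 / (4 * b)) by rw [Real.exp_add]; ring]
    rw [this, Real.exp_add]
    ring
  simp only [key]
  rw [integral_const_mul]
  have hβ : (0:ℝ) < (a + b) / (4 * (a * b)) := by positivity
  have : ∫ y : ℝ, Real.exp (-((a + b) / (4 * (a * b))) * (y - b * w / (a + b)) ^ 2)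
      = Real.sqrt (π / ((a + b) / (4 * (a * b)))) := by
    rw [show (fun y : ℝ => Real.exp (-((a + b) / (4 * (a * b))) * (y - b * w / (a + b)) ^ 2))
        = (fun y : ℝ => Real.exp (-((a + b) / (4 * (a * b))) * y ^ 2)) ∘
          (fun y : ℝ => y - b * w / (a + b)) from rfl]
    rw [Function.comp_def, integral_sub_right_eq_self
      (fun y : ℝ => Real.exp (-((a + b) / (4 * (a * b))) * y ^ 2)) (b * w / (a + b))]
    exact integral_gaussian _
  rw [this, gk]
  -- constants
  have hconst : (Real.sqrt (4 * π * a))⁻¹ * (Real.sqrt (4 * π * b))⁻¹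
      * Real.sqrt (π / ((a + b) / (4 * (a * b)))) = (Real.sqrt (4 * π * (a + b)))⁻¹ := by
    rw [← Real.sqrt_inv, ← Real.sqrt_inv, ← Real.sqrt_mul (by positivity),
      ← Real.sqrt_mul (by positivity), ← Real.sqrt_inv]
    congr 1
    have h1 : (4 * π * a) ≠ 0 := by positivity
    have h2 : (4 * π * b) ≠ 0 := by positivity
    have h3 : a + b ≠ 0 := by positivity
    field_simp
  rw [← hconst]
  ring


lemma rpow_neg_half_pow {c : ℝ} (hc : 0 < c) (n : ℕ) :
    c ^ (-(n : ℝ) / 2) = ((Real.sqrt c)⁻¹) ^ n := by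
  rw [show -(n:ℝ)/2 = (-(1/2:ℝ)) * n by ring, Real.rpow_mul hc.le, Real.rpow_natCast]
  congr 1
  rw [show (-(1/2:ℝ)) = -(1/2:ℝ) from rfl, Real.rpow_neg hc.le, Real.sqrt_eq_rpow]

lemma heatKernel_eq_prod {n : ℕ} {t : ℝ} (ht : 0 < t) (x : EuclideanSpace ℝ (Fin n)) :
    heatKernel n t x = ∏ i, gk t (x i) := by
  have hnorm : ‖x‖ ^ 2 = ∑ i, x i ^ 2 := by
    rw [EuclideanSpace.norm_eq]
    simp only [Real.norm_eq_abs, sq_abs]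
    exact Real.sq_sqrt (Finset.sum_nonneg fun i _ => sq_nonneg (x i))
  rw [heatKernel, hnorm, rpow_neg_half_pow (by positivity) n]
  simp only [gk, Finset.prod_mul_distrib, Finset.prod_const, Finset.card_univ,
    Fintype.card_fin, ← Real.exp_sum]
  congr 1
  rw [← Finset.sum_div, Finset.sum_neg_distrib]

lemma euclid_integral_prod {n : ℕ} (f : Fin n → ℝ → ℝ) :
    ∫ x : EuclideanSpace ℝ (Fin n), ∏ i, f i (x i) = ∏ i, ∫ u, f i u := by
  have h := (EuclideanSpace.volume_preserving_symm_measurableEquiv_toLp (ι := Fin n)).integral_comp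
    (MeasurableEquiv.toLp 2 (Fin n → ℝ)).symm.measurableEmbedding
    (fun y : Fin n → ℝ => ∏ i, f i (y i))
  rw [← MeasureTheory.integral_fintype_prod_eq_prod (f := f), ← volume_pi, ← h]
  rfl

lemma euclid_integrable_prod {n : ℕ} (f : Fin n → ℝ → ℝ) (hf : ∀ i, Integrable (f i)) :
    Integrable (fun x : EuclideanSpace ℝ (Fin n) => ∏ i, f i (x i)) := by
  have h := ((EuclideanSpace.volume_preserving_symm_measurableEquiv_toLp (ι := Fin n)).integrable_comp_emb
    (MeasurableEquiv.toLp 2 (Fin n → ℝ)).symm.measurableEmbedding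
    (g := fun y : Fin n → ℝ => ∏ i, f i (y i))).mpr (Integrable.fintype_prod hf)
  exact h

lemma gk_conv {a b : ℝ} (ha : 0 < a) (hb : 0 < b) (u v : ℝ) :
    ∫ y, gk a (u - y) * gk b (y - v) = gk (a + b) (u - v) := by
  have h := integral_sub_right_eq_self (μ := (volume : Measure ℝ))
    (fun y : ℝ => gk a (u - v - y) * gk b y) v
  simp only [sub_sub_sub_cancel_right] at h
  rw [h, gk_conv_zero ha hb]

lemma heatKernel_pos {n : ℕ} {t : ℝ} (ht : 0 < t) (x : EuclideanSpace ℝ (Fin n)) :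
    0 < heatKernel n t x := by
  rw [heatKernel]
  have : (0:ℝ) < 4 * π * t := by positivity
  positivity

lemma heatKernel_continuous {n : ℕ} (t : ℝ) : Continuous (heatKernel n t) := by
  unfold heatKernel
  fun_prop

lemma heatKernel_integrable {n : ℕ} {t : ℝ} (ht : 0 < t) :
    Integrable (heatKernel n t) := by
  rw [show heatKernel n t = fun x => ∏ i, gk t (x i) from funext (heatKernel_eq_prod ht)]
  exact euclid_integrable_prod _ fun i => gk_integrable ht

lemma heatKernel_integral {n : ℕ} {t : ℝ} (ht : 0 < t) :
    ∫ x, heatKernel n t x = 1 := by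
  rw [show heatKernel n t = fun x => ∏ i, gk t (x i) from funext (heatKernel_eq_prod ht)]
  rw [euclid_integral_prod]
  simp [gk_integral ht]

lemma heatKernel_conv {n : ℕ} {a b : ℝ} (ha : 0 < a) (hb : 0 < b)
    (x z : EuclideanSpace ℝ (Fin n)) :
    ∫ y, heatKernel n a (x - y) * heatKernel n b (y - z) = heatKernel n (a + b) (x - z) := by
  have key : ∀ y : EuclideanSpace ℝ (Fin n), heatKernel n a (x - y) * heatKernel n b (y - z)
      = ∏ i, (fun u => gk a (x i - u) * gk b (u - z i)) (y i) := by
    intro y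
    rw [heatKernel_eq_prod ha, heatKernel_eq_prod hb, ← Finset.prod_mul_distrib]
    rfl
  simp_rw [key]
  have h2 := euclid_integral_prod (fun i u => gk a (x i - u) * gk b (u - z i))
  simp only [] at h2
  rw [h2, heatKernel_eq_prod (by positivity : (0:ℝ) < a + b)]
  refine Finset.prod_congr rfl fun i _ => ?_
  rw [gk_conv ha hb]
  rfl

/-- The heat semigroup `e^{τΔ}h = G_τ ∗ h` acting on scalar functions. -/
noncomputable def heat (n : ℕ) (τ : ℝ) (h : EuclideanSpace ℝ (Fin n) → ℝ)
    (x : EuclideanSpace ℝ (Fin n)) : ℝ :=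
  ∫ y, heatKernel n τ (x - y) * h y

variable {n : ℕ}

lemma heatKernel_comp_integrable {t : ℝ} (ht : 0 < t) (x : EuclideanSpace ℝ (Fin n)) :
    Integrable (fun y => heatKernel n t (x - y)) :=
  (heatKernel_integrable ht).comp_sub_left x

lemma heatKernel_comp_integral {t : ℝ} (ht : 0 < t) (x : EuclideanSpace ℝ (Fin n)) :
    ∫ y, heatKernel n t (x - y) = 1 := by
  rw [integral_sub_left_eq_self (heatKernel n t) volume x, heatKernel_integral ht]

lemma heat_integrand_integrable {t : ℝ} (ht : 0 < t) {h : EuclideanSpace ℝ (Fin n) → ℝ}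
    (hm : Measurable h) {M : ℝ} (hM : ∀ y, |h y| ≤ M) (x : EuclideanSpace ℝ (Fin n)) :
    Integrable (fun y => heatKernel n t (x - y) * h y) := by
  have := Integrable.bdd_mul (heatKernel_comp_integrable ht x)
    hm.aestronglyMeasurable (Filter.Eventually.of_forall fun y => by simpa [Real.norm_eq_abs] using hM y)
  simpa [mul_comm] using this

lemma heat_nonneg {t : ℝ} (ht : 0 < t) {h : EuclideanSpace ℝ (Fin n) → ℝ}
    (hpos : ∀ y, 0 ≤ h y) (x : EuclideanSpace ℝ (Fin n)) : 0 ≤ heat n t h x :=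
  integral_nonneg fun y => mul_nonneg (heatKernel_pos ht _).le (hpos y)

lemma heat_abs_le {t : ℝ} (ht : 0 < t) {h : EuclideanSpace ℝ (Fin n) → ℝ}
    (hm : Measurable h) {M : ℝ} (hM : ∀ y, |h y| ≤ M) (x : EuclideanSpace ℝ (Fin n)) :
    |heat n t h x| ≤ M := by
  have habs : |heat n t h x| ≤ ∫ y, |heatKernel n t (x - y) * h y| := by
    rw [heat]
    simpa [Real.norm_eq_abs, abs_mul] using
      norm_integral_le_integral_norm (μ := volume) (fun y => heatKernel n t (x - y) * h y)
  refine habs.trans ?_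
  have hle : ∀ y, |heatKernel n t (x - y) * h y| ≤ heatKernel n t (x - y) * M := by
    intro y
    rw [abs_mul, abs_of_pos (heatKernel_pos ht (x - y))]
    exact mul_le_mul_of_nonneg_left (hM y) (heatKernel_pos ht _).le
  calc ∫ y, |heatKernel n t (x - y) * h y| ≤ ∫ y, heatKernel n t (x - y) * M :=
        integral_mono (heat_integrand_integrable ht hm hM x).abs
          ((heatKernel_comp_integrable ht x).mul_const M) hle
    _ = M := by rw [integral_mul_const, heatKernel_comp_integral ht x, one_mul]

lemma heat_stronglyMeasurable (t : ℝ) {h : EuclideanSpace ℝ (Fin n) → ℝ} (hm : Measurable h) :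
    StronglyMeasurable (heat n t h) := by
  have : StronglyMeasurable
      (fun p : EuclideanSpace ℝ (Fin n) × EuclideanSpace ℝ (Fin n) =>
        heatKernel n t (p.1 - p.2) * h p.2) :=
    (((heatKernel_continuous t).measurable.comp (measurable_fst.sub measurable_snd)).mul
      (hm.comp measurable_snd)).stronglyMeasurable
  exact this.integral_prod_right'

lemma heat_semigroup {a b : ℝ} (ha : 0 < a) (hb : 0 < b)
    {h : EuclideanSpace ℝ (Fin n) → ℝ} (hm : Measurable h) {M : ℝ} (hM : ∀ y, |h y| ≤ M)
    (x : EuclideanSpace ℝ (Fin n)) :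
    heat n a (heat n b h) x = heat n (a + b) h x := by
  have hM0 : 0 ≤ M := (abs_nonneg _).trans (hM (0:EuclideanSpace ℝ (Fin n)))
  set f : EuclideanSpace ℝ (Fin n) → EuclideanSpace ℝ (Fin n) → ℝ :=
    fun y z => heatKernel n a (x - y) * (heatKernel n b (y - z) * h z) with hf
  have hfmeas : AEStronglyMeasurable (Function.uncurry f)
      ((volume : Measure (EuclideanSpace ℝ (Fin n))).prod volume) := by
    apply Measurable.aestronglyMeasurable
    exact (((heatKernel_continuous a).measurable.comp
        ((measurable_const.sub measurable_fst))).mul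
      (((heatKernel_continuous b).measurable.comp (measurable_fst.sub measurable_snd)).mul
        (hm.comp measurable_snd)))
  have hinner : ∀ y, Integrable (f y) := fun y =>
    ((heat_integrand_integrable hb hm hM y).const_mul _)
  have hnorm_le : ∀ y, (∫ z, ‖f y z‖) ≤ M * heatKernel n a (x - y) := by
    intro y
    have h1 : ∀ z, ‖f y z‖ ≤ heatKernel n a (x - y) * (heatKernel n b (y - z) * M) := by
      intro z
      rw [Real.norm_eq_abs, hf]
      simp only [abs_mul, abs_of_pos (heatKernel_pos ha (x - y)),
        abs_of_pos (heatKernel_pos hb (y - z))]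
      exact mul_le_mul_of_nonneg_left
        (mul_le_mul_of_nonneg_left (hM z) (heatKernel_pos hb _).le)
        (heatKernel_pos ha _).le
    calc (∫ z, ‖f y z‖)
        ≤ ∫ z, heatKernel n a (x - y) * (heatKernel n b (y - z) * M) :=
          integral_mono (hinner y).norm
            (((heatKernel_comp_integrable hb y).mul_const M).const_mul _) h1
      _ = M * heatKernel n a (x - y) := by
          rw [integral_const_mul, integral_mul_const, heatKernel_comp_integral hb y]
          ring
  have huncurry : Integrable (Function.uncurry f)
      ((volume : Measure (EuclideanSpace ℝ (Fin n))).prod volume) := by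
    rw [integrable_prod_iff hfmeas]
    constructor
    · exact Filter.Eventually.of_forall fun y => hinner y
    · apply Integrable.mono' (((heatKernel_comp_integrable ha x).const_mul M))
        hfmeas.norm.integral_prod_right'
      refine Filter.Eventually.of_forall fun y => ?_
      rw [Real.norm_eq_abs, abs_of_nonneg (integral_nonneg fun z => norm_nonneg _)]
      exact hnorm_le y
  have hswap := integral_integral_swap huncurry
  calc heat n a (heat n b h) x
      = ∫ y, ∫ z, f y z := by
        rw [heat]
        congr 1
        funext y
        rw [heat, ← integral_const_mul]
    _ = ∫ z, ∫ y, f y z := hswap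
    _ = ∫ z, (∫ y, heatKernel n a (x - y) * heatKernel n b (y - z)) * h z := by
        congr 1
        funext z
        rw [← integral_mul_const]
        congr 1
        funext y
        rw [hf]
        ring
    _ = heat n (a + b) h x := by
        rw [heat]
        congr 1
        funext z
        rw [heatKernel_conv ha hb x z]

lemma heat_sq_le {t : ℝ} (ht : 0 < t) {g : EuclideanSpace ℝ (Fin n) → ℝ}
    (hm : Measurable g) {M : ℝ} (hM : ∀ y, |g y| ≤ M) (x : EuclideanSpace ℝ (Fin n)) :
    (heat n t g x) ^ 2 ≤ heat n t (fun y => g y ^ 2) x := by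
  set m := heat n t g x with hmdef
  have hg2 : ∀ y, |g y ^ 2| ≤ M ^ 2 := by
    intro y
    rw [abs_pow]
    exact pow_le_pow_left₀ (abs_nonneg _) (hM y) 2
  have I1 : Integrable (fun y => heatKernel n t (x - y) * g y ^ 2) :=
    heat_integrand_integrable ht (hm.pow_const 2) hg2 x
  have I2 : Integrable (fun y => heatKernel n t (x - y) * g y) :=
    heat_integrand_integrable ht hm hM x
  have I3 : Integrable (fun y => heatKernel n t (x - y)) := heatKernel_comp_integrable ht x
  have key : heat n t (fun y => g y ^ 2) x - m ^ 2
      = ∫ y, heatKernel n t (x - y) * (g y - m) ^ 2 := by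
    have expand : (fun y => heatKernel n t (x - y) * (g y - m) ^ 2)
        = fun y => (heatKernel n t (x - y) * g y ^ 2
            - (2 * m) * (heatKernel n t (x - y) * g y))
            + m ^ 2 * heatKernel n t (x - y) := by
      funext y; ring
    have I12 : Integrable (fun y => heatKernel n t (x - y) * g y ^ 2
        - 2 * m * (heatKernel n t (x - y) * g y)) := I1.sub (I2.const_mul _)
    have I3' : Integrable (fun y => m ^ 2 * heatKernel n t (x - y)) := I3.const_mul _
    rw [expand, integral_add I12 I3',
      integral_sub I1 (I2.const_mul _), integral_const_mul, integral_const_mul,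
      heatKernel_comp_integral ht x]
    have e1 : heat n t (fun y => g y ^ 2) x = ∫ y, heatKernel n t (x - y) * g y ^ 2 := rfl
    have e2 : m = ∫ y, heatKernel n t (x - y) * g y := hmdef
    rw [e1, ← e2]
    ring
  have hnn : 0 ≤ ∫ y, heatKernel n t (x - y) * (g y - m) ^ 2 :=
    integral_nonneg fun y => mul_nonneg (heatKernel_pos ht _).le (sq_nonneg _)
  linarith [key ▸ hnn]

lemma heatKernel_lower {s : ℝ} (hs : 0 < s) {u : EuclideanSpace ℝ (Fin n)}
    (hu : ‖u‖ ≤ Real.sqrt s) :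
    ((Real.sqrt (4 * π * s))⁻¹) ^ n * Real.exp (-4⁻¹) ≤ heatKernel n s u := by
  rw [heatKernel, rpow_neg_half_pow (by positivity : (0:ℝ) < 4 * π * s)]
  apply mul_le_mul_of_nonneg_left _ (pow_nonneg (inv_nonneg.2 (Real.sqrt_nonneg _)) n)
  apply Real.exp_le_exp.2
  have h2 : ‖u‖ ^ 2 ≤ s := by
    nlinarith [Real.sqrt_nonneg s, Real.sq_sqrt hs.le, norm_nonneg u]
  have h3 : ‖u‖ ^ 2 / (4 * s) ≤ 4⁻¹ := by
    rw [show (4⁻¹:ℝ) = s / (4 * s) by field_simp]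
    gcongr
  rw [neg_div]
  linarith

lemma ball_volume_eq (hn : 1 ≤ n) {s : ℝ} (hs : 0 < s) (x : EuclideanSpace ℝ (Fin n)) :
    (volume (ball x (Real.sqrt s))).toReal
      = (Real.sqrt s) ^ n * (Real.sqrt π ^ n / Real.Gamma ((n:ℝ) / 2 + 1)) := by
  haveI : Nonempty (Fin n) := ⟨⟨0, hn⟩⟩
  have hΓ : 0 < Real.Gamma ((n:ℝ) / 2 + 1) := Real.Gamma_pos_of_pos (by positivity)
  rw [EuclideanSpace.volume_ball, Fintype.card_fin, ENNReal.toReal_mul, ENNReal.toReal_pow,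
    ENNReal.toReal_ofReal (Real.sqrt_nonneg s),
    ENNReal.toReal_ofReal (div_nonneg (pow_nonneg (Real.sqrt_nonneg _) _) hΓ.le)]

lemma inv_vol_le (hn : 1 ≤ n) {s : ℝ} (hs : 0 < s) (x y : EuclideanSpace ℝ (Fin n))
    (hy : y ∈ ball x (Real.sqrt s)) :
    ((volume (ball x (Real.sqrt s))).toReal)⁻¹
      ≤ (2 ^ n * Real.Gamma ((n:ℝ) / 2 + 1) * Real.exp 4⁻¹) * heatKernel n s (x - y) := by
  have hΓ : 0 < Real.Gamma ((n:ℝ) / 2 + 1) := Real.Gamma_pos_of_pos (by positivity)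
  have hsq : Real.sqrt (4 * π * s) = 2 * (Real.sqrt π * Real.sqrt s) := by
    rw [show 4 * π * s = 2 ^ 2 * (π * s) by ring, Real.sqrt_mul (by positivity),
      Real.sqrt_sq (by norm_num : (0:ℝ) ≤ 2), Real.sqrt_mul pi_pos.le]
  have hsqs : 0 < Real.sqrt s := Real.sqrt_pos.2 hs
  have hsqpi : 0 < Real.sqrt π := Real.sqrt_pos.2 pi_pos
  have hvol : ((volume (ball x (Real.sqrt s))).toReal)⁻¹
      = 2 ^ n * Real.Gamma ((n:ℝ) / 2 + 1) * ((Real.sqrt (4 * π * s))⁻¹) ^ n := by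
    rw [ball_volume_eq hn hs x, hsq]
    field_simp
    simp only [← mul_pow]
    rw [show √s * √π * 2 * (1 / (2 * √π * √s)) = 1 by field_simp, one_pow]
  have hnorm : ‖x - y‖ ≤ Real.sqrt s := by
    have := mem_ball.mp hy
    rw [dist_eq_norm] at this
    rw [show x - y = -(y - x) by abel, norm_neg]
    exact this.le
  calc ((volume (ball x (Real.sqrt s))).toReal)⁻¹
      = (2 ^ n * Real.Gamma ((n:ℝ) / 2 + 1) * Real.exp 4⁻¹)
        * (((Real.sqrt (4 * π * s))⁻¹) ^ n * Real.exp (-4⁻¹)) := by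
        rw [hvol, show (2:ℝ) ^ n * Real.Gamma ((n:ℝ) / 2 + 1) * Real.exp 4⁻¹
            * (((Real.sqrt (4 * π * s))⁻¹) ^ n * Real.exp (-4⁻¹))
          = 2 ^ n * Real.Gamma ((n:ℝ) / 2 + 1) * ((Real.sqrt (4 * π * s))⁻¹) ^ n
            * (Real.exp 4⁻¹ * Real.exp (-4⁻¹)) by ring, ← Real.exp_add]
        norm_num
    _ ≤ (2 ^ n * Real.Gamma ((n:ℝ) / 2 + 1) * Real.exp 4⁻¹) * heatKernel n s (x - y) := by
        apply mul_le_mul_of_nonneg_left (heatKernel_lower hs hnorm)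
        positivity

lemma integrableOn_ball_of_bdd {f : EuclideanSpace ℝ (Fin n) → ℝ} (hf : Measurable f)
    {K : ℝ} (hK : ∀ y, |f y| ≤ K) (x : EuclideanSpace ℝ (Fin n)) (r : ℝ) :
    IntegrableOn f (ball x r) := by
  have hc : IntegrableOn (fun _ : EuclideanSpace ℝ (Fin n) => K) (ball x r) volume :=
    integrableOn_const measure_ball_lt_top.ne
  exact Integrable.mono' hc hf.aestronglyMeasurable.restrict
    (Filter.Eventually.of_forall fun y => by simpa [Real.norm_eq_abs] using hK y)

/-- there is `C = C(n)` such that for bounded measurable `h`, all `x`, and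
`0 < s < t/2`,
`⨍_{B(x,√s)} |e^{(t−s)Δ}h(y)|² dy ≤ C · e^{(3t/4)Δ}(|e^{(t/4)Δ}h|²)(x)`. -/
theorem stmt6 (n : ℕ) (hn : 1 ≤ n) :
    ∃ C : ℝ, 0 < C ∧ ∀ (h : EuclideanSpace ℝ (Fin n) → ℝ), Measurable h →
      ∀ M : ℝ, (∀ x, |h x| ≤ M) →
      ∀ (t s : ℝ) (x : EuclideanSpace ℝ (Fin n)), 0 < s → s < t / 2 →
        ⨍ y in ball x (Real.sqrt s), (heat n (t - s) h y) ^ 2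
          ≤ C * heat n (3 * t / 4) (fun y => (heat n (t / 4) h y) ^ 2) x := by
  have hΓ : 0 < Real.Gamma ((n:ℝ) / 2 + 1) := Real.Gamma_pos_of_pos (by positivity)
  refine ⟨2 ^ n * Real.Gamma ((n:ℝ) / 2 + 1) * Real.exp 4⁻¹, by positivity, ?_⟩
  set C := (2:ℝ) ^ n * Real.Gamma ((n:ℝ) / 2 + 1) * Real.exp 4⁻¹ with hC
  have hCpos : 0 < C := by positivity
  intro h hm M hM t s x hs hst
  have ht : 0 < t := by linarith
  have ht4 : 0 < t / 4 := by linarith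
  have hσ : 0 < 3 * t / 4 - s := by linarith
  set σ := 3 * t / 4 - s with hσdef
  set g : EuclideanSpace ℝ (Fin n) → ℝ := heat n (t / 4) h with hg
  have hgmeas : Measurable g := (heat_stronglyMeasurable _ hm).measurable
  have hgM : ∀ y, |g y| ≤ M := fun y => heat_abs_le ht4 hm hM y
  set F : EuclideanSpace ℝ (Fin n) → ℝ := fun y => g y ^ 2 with hF
  have hFmeas : Measurable F := hgmeas.pow_const 2
  have hFM : ∀ y, |F y| ≤ M ^ 2 := fun y => by
    rw [hF, abs_pow]
    exact pow_le_pow_left₀ (abs_nonneg _) (hgM y) 2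
  have hFnn : ∀ y, 0 ≤ F y := fun y => sq_nonneg _
  -- step 1 : semigroup
  have step1 : ∀ y, heat n (t - s) h y = heat n σ g y := by
    intro y
    rw [hg, heat_semigroup hσ ht4 hm hM y, show σ + t / 4 = t - s by rw [hσdef]; ring]
  -- step 2 : Jensen
  have step2 : ∀ y, (heat n σ g y) ^ 2 ≤ heat n σ F y := fun y =>
    heat_sq_le hσ hgmeas hgM y
  have hσFmeas : Measurable (heat n σ F) := (heat_stronglyMeasurable _ hFmeas).measurable
  have hσFM : ∀ y, |heat n σ F y| ≤ M ^ 2 := fun y => heat_abs_le hσ hFmeas hFM y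
  have hσFnn : ∀ y, 0 ≤ heat n σ F y := fun y => heat_nonneg hσ hFnn y
  set B := ball x (Real.sqrt s) with hB
  have hvolpos : 0 < (volume B).toReal :=
    ENNReal.toReal_pos (measure_ball_pos volume x (Real.sqrt_pos.2 hs)).ne'
      measure_ball_lt_top.ne
  -- integrability on the ball
  have hLHSint : IntegrableOn (fun y => (heat n (t - s) h y) ^ 2) B := by
    apply integrableOn_ball_of_bdd ((heat_stronglyMeasurable _ hm).measurable.pow_const 2)
      (K := M ^ 2) (fun y => ?_) x (Real.sqrt s)
    rw [abs_pow]
    exact pow_le_pow_left₀ (abs_nonneg _) (heat_abs_le (by linarith : 0 < t - s) hm hM y) 2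
  have hRHSint : IntegrableOn (heat n σ F) B :=
    integrableOn_ball_of_bdd hσFmeas hσFM x (Real.sqrt s)
  -- the full-space integrand on the RHS
  have hGint : Integrable (fun y => heatKernel n s (x - y) * heat n σ F y) :=
    heat_integrand_integrable hs hσFmeas hσFM x
  have main : ∫ y in B, (heat n (t - s) h y) ^ 2
      ≤ (volume B).toReal * C * heat n (3 * t / 4) F x := by
    calc ∫ y in B, (heat n (t - s) h y) ^ 2
        ≤ ∫ y in B, heat n σ F y := by
          apply setIntegral_mono_on hLHSint hRHSint measurableSet_ball
          intro y _
          rw [step1 y]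
          exact step2 y
      _ ≤ ∫ y in B, (volume B).toReal * C * (heatKernel n s (x - y) * heat n σ F y) := by
          apply setIntegral_mono_on hRHSint
            ((hGint.const_mul _).integrableOn) measurableSet_ball
          intro y hy
          have h1 : ((volume B).toReal)⁻¹ ≤ C * heatKernel n s (x - y) :=
            inv_vol_le hn hs x y hy
          have h2 : 1 ≤ (volume B).toReal * C * heatKernel n s (x - y) := by
            rw [mul_assoc]
            calc (1:ℝ) = (volume B).toReal * ((volume B).toReal)⁻¹ := by
                  rw [mul_inv_cancel₀ hvolpos.ne']
              _ ≤ (volume B).toReal * (C * heatKernel n s (x - y)) := by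
                  exact mul_le_mul_of_nonneg_left h1 hvolpos.le
          calc heat n σ F y = 1 * heat n σ F y := (one_mul _).symm
            _ ≤ ((volume B).toReal * C * heatKernel n s (x - y)) * heat n σ F y :=
                mul_le_mul_of_nonneg_right h2 (hσFnn y)
            _ = (volume B).toReal * C * (heatKernel n s (x - y) * heat n σ F y) := by ring
      _ ≤ (volume B).toReal * C * ∫ y, heatKernel n s (x - y) * heat n σ F y := by
          rw [← integral_const_mul]
          apply setIntegral_le_integral (hGint.const_mul _)
          exact Filter.Eventually.of_forall fun y =>
            mul_nonneg (mul_nonneg hvolpos.le hCpos.le)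
              (mul_nonneg (heatKernel_pos hs (x - y)).le (hσFnn y))
      _ = (volume B).toReal * C * heat n (3 * t / 4) F x := by
          congr 1
          have : (∫ y, heatKernel n s (x - y) * heat n σ F y) = heat n s (heat n σ F) x := rfl
          rw [this, heat_semigroup hs hσ hFmeas hFM x, show s + σ = 3 * t / 4 by
            rw [hσdef]; ring]
  rw [setAverage_eq, smul_eq_mul]
  calc ((volume B).toReal)⁻¹ * ∫ y in B, (heat n (t - s) h y) ^ 2
      ≤ ((volume B).toReal)⁻¹ * ((volume B).toReal * C * heat n (3 * t / 4) F x) :=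
        mul_le_mul_of_nonneg_left main (inv_nonneg.2 hvolpos.le)
    _ = C * heat n (3 * t / 4) F x := by
        field_simp
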